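/- Let V be a nonempty finite type, v*, v† ∈ V, and α > 1 a real number. Let D₁ be a divergence on S(V) and D₂ a divergence on S(V × V). Fix F_J ∈ S(V × V) and F₁, F₂ ∈ S(V) with F₁(v*) > 0, F₂(v†) > 0, and the abductive factorization F_J(v*, v†) = α · F₁(v*) · F₂(v†). Then there exists ε₀ > 0 such that for all J ∈ S(V × V) and M₁, M₂ ∈ S(V) satisfying D₂ F_J J ≤ ε₀, D₁ F₁ M₁ ≤ ε₀, D₁ F₂ M₂ ≤ ε₀, M₁(v*) > 0, and the marginal condition ∑ u ∈ V, J(v*, u) = M₁(v*), one has J(v*, v†)/M₁(v*) > M₂(v†). -/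

import Mathlib

open scoped BigOperators

/-- A divergence on the probability simplex `stdSimplex ℝ W`: continuous (in the
subspace topology on the simplex), nonnegative, and vanishing exactly on the diagonal. -/
def IsDivergence {W : Type*} [Fintype W] (D : (W → ℝ) → (W → ℝ) → ℝ) : Prop :=
  ContinuousOn (fun pq : (W → ℝ) × (W → ℝ) => D pq.1 pq.2)
      (stdSimplex ℝ W ×ˢ stdSimplex ℝ W) ∧
    (∀ p ∈ stdSimplex ℝ W, ∀ q ∈ stdSimplex ℝ W, 0 ≤ D p q) ∧
    (∀ p ∈ stdSimplex ℝ W, ∀ q ∈ stdSimplex ℝ W, (D p q = 0 ↔ p = q))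

/-- **Abduction proposition for mathematics.**
If the mathematician's prediction distributions satisfy the abductive factorization
`F_J(v*, v†) = α · F₁(v*) · F₂(v†)` with `α > 1`, then there is `ε₀ > 0` such that
any oracle distributions `J, M₁, M₂` within divergence `ε₀` of `F_J, F₁, F₂` and
satisfying the marginal condition obey the abduction implication:
`J(v*, v†)/M₁(v*) > M₂(v†)`. -/
theorem abduction_math
    {V : Type*} [Fintype V] [Nonempty V]
    (vstar vdag : V) (α : ℝ) (hα : 1 < α)
    (D₁ : (V → ℝ) → (V → ℝ) → ℝ) (hD₁ : IsDivergence D₁)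
    (D₂ : (V × V → ℝ) → (V × V → ℝ) → ℝ) (hD₂ : IsDivergence D₂)
    (FJ : V × V → ℝ) (hFJ : FJ ∈ stdSimplex ℝ (V × V))
    (F₁ F₂ : V → ℝ) (hF₁ : F₁ ∈ stdSimplex ℝ V) (hF₂ : F₂ ∈ stdSimplex ℝ V)
    (hF₁pos : 0 < F₁ vstar) (hF₂pos : 0 < F₂ vdag)
    (hfact : FJ (vstar, vdag) = α * F₁ vstar * F₂ vdag) :
    ∃ ε₀ : ℝ, 0 < ε₀ ∧
      ∀ J ∈ stdSimplex ℝ (V × V), ∀ M₁ ∈ stdSimplex ℝ V, ∀ M₂ ∈ stdSimplex ℝ V,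
        D₂ FJ J ≤ ε₀ → D₁ F₁ M₁ ≤ ε₀ → D₁ F₂ M₂ ≤ ε₀ →
        0 < M₁ vstar → (∑ u : V, J (vstar, u)) = M₁ vstar →
        M₂ vdag < J (vstar, vdag) / M₁ vstar := by
  classical
  obtain ⟨hD₁c, hD₁nn, hD₁eq⟩ := hD₁
  obtain ⟨hD₂c, hD₂nn, hD₂eq⟩ := hD₂
  -- The compact product of simplices
  set K : Set ((V × V → ℝ) × (V → ℝ) × (V → ℝ)) :=
    (stdSimplex ℝ (V × V)) ×ˢ ((stdSimplex ℝ V) ×ˢ (stdSimplex ℝ V)) with hK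
  have hKcomp : IsCompact K :=
    (isCompact_stdSimplex _ _).prod ((isCompact_stdSimplex _ _).prod (isCompact_stdSimplex _ _))
  -- The "bad set" where the conclusion fails
  set B : Set ((V × V → ℝ) × (V → ℝ) × (V → ℝ)) :=
    K ∩ {x | x.1 (vstar, vdag) ≤ x.2.2 vdag * x.2.1 vstar} with hB
  have hBclosed : IsClosed {x : (V × V → ℝ) × (V → ℝ) × (V → ℝ) |
      x.1 (vstar, vdag) ≤ x.2.2 vdag * x.2.1 vstar} := by
    apply isClosed_le
    · exact (continuous_apply (vstar, vdag)).comp continuous_fst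
    · exact ((continuous_apply vdag).comp (continuous_snd.comp continuous_snd)).mul
        ((continuous_apply vstar).comp (continuous_fst.comp continuous_snd))
  have hBcomp : IsCompact B := hKcomp.inter_right hBclosed
  -- The combined divergence function
  set f : ((V × V → ℝ) × (V → ℝ) × (V → ℝ)) → ℝ :=
    fun x => max (D₂ FJ x.1) (max (D₁ F₁ x.2.1) (D₁ F₂ x.2.2)) with hf
  have hfcont : ContinuousOn f K := by
    have h1 : ContinuousOn (fun x : (V × V → ℝ) × (V → ℝ) × (V → ℝ) => D₂ FJ x.1) K :=
      hD₂c.comp ((continuous_const.prodMk continuous_fst).continuousOn)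
        (fun x hx => ⟨hFJ, hx.1⟩)
    have h2 : ContinuousOn (fun x : (V × V → ℝ) × (V → ℝ) × (V → ℝ) => D₁ F₁ x.2.1) K :=
      hD₁c.comp ((continuous_const.prodMk (continuous_fst.comp continuous_snd)).continuousOn)
        (fun x hx => ⟨hF₁, hx.2.1⟩)
    have h3 : ContinuousOn (fun x : (V × V → ℝ) × (V → ℝ) × (V → ℝ) => D₁ F₂ x.2.2) K :=
      hD₁c.comp ((continuous_const.prodMk (continuous_snd.comp continuous_snd)).continuousOn)
        (fun x hx => ⟨hF₂, hx.2.2⟩)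
    exact fun x hx => ((h1 x hx).max ((h2 x hx).max (h3 x hx)))
  -- f is strictly positive on B
  have hfpos : ∀ x ∈ B, 0 < f x := by
    rintro x ⟨hxK, hxB⟩
    obtain ⟨hxJ, hxM₁, hxM₂⟩ := hxK
    simp only [Set.mem_setOf_eq] at hxB
    rcases lt_or_ge 0 (f x) with h | hle
    · exact h
    · exfalso
      have h2 : D₂ FJ x.1 = 0 :=
        le_antisymm (le_trans (le_max_left _ _) hle) (hD₂nn FJ hFJ x.1 hxJ)
      have h3 : D₁ F₁ x.2.1 = 0 :=
        le_antisymm (le_trans ((le_max_left _ _).trans (le_max_right _ _)) hle)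
          (hD₁nn F₁ hF₁ x.2.1 hxM₁)
      have h4 : D₁ F₂ x.2.2 = 0 :=
        le_antisymm (le_trans ((le_max_right _ _).trans (le_max_right _ _)) hle)
          (hD₁nn F₂ hF₂ x.2.2 hxM₂)
      have e2 : x.1 = FJ := ((hD₂eq FJ hFJ x.1 hxJ).mp h2).symm
      have e3 : x.2.1 = F₁ := ((hD₁eq F₁ hF₁ x.2.1 hxM₁).mp h3).symm
      have e4 : x.2.2 = F₂ := ((hD₁eq F₂ hF₂ x.2.2 hxM₂).mp h4).symm
      rw [e2, e3, e4, hfact] at hxB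
      nlinarith [mul_pos hF₁pos hF₂pos]
  -- Split on whether B is empty
  rcases B.eq_empty_or_nonempty with hBe | hBne
  · refine ⟨1, one_pos, ?_⟩
    intro J hJ M₁ hM₁ M₂ hM₂ _ _ _ hM₁pos _
    rw [lt_div_iff₀ hM₁pos]
    by_contra hle
    push_neg at hle
    have : (J, M₁, M₂) ∈ B := ⟨⟨hJ, hM₁, hM₂⟩, hle⟩
    rw [hBe] at this
    exact this
  · obtain ⟨x₀, hx₀B, hx₀min⟩ := hBcomp.exists_isMinOn hBne (hfcont.mono (fun x hx => hx.1))
    refine ⟨f x₀ / 2, by linarith [hfpos x₀ hx₀B], ?_⟩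
    intro J hJ M₁ hM₁ M₂ hM₂ hdJ hd1 hd2 hM₁pos _
    rw [lt_div_iff₀ hM₁pos]
    by_contra hle
    push_neg at hle
    have hmem : (J, M₁, M₂) ∈ B := ⟨⟨hJ, hM₁, hM₂⟩, hle⟩
    have h1 : f x₀ ≤ f (J, M₁, M₂) := hx₀min hmem
    have h2 : f (J, M₁, M₂) ≤ f x₀ / 2 := by
      simp only [f]
      exact max_le hdJ (max_le hd1 hd2)
    linarith [hfpos x₀ hx₀B]
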